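/- Let p be an odd prime, l ≥ 2, and q = p^l. Let a, b be natural numbers with a ≤ q−1 and b ≤ q^2−1 such that: (1) b = wq + b' for some natural numbers w < q and b' < p^{l−1} with p^i dividing w for some integer 1 ≤ i ≤ l; (2) a < p^{l−1}; and (3) there is some integer s with 0 ≤ s ≤ i−1 such that the s-th base-p digit of a and the s-th base-p digit of b' are both 0. Then the monomial M_{a,b}(x,y) = x^a·y^b is good: for all α, β ∈ F_{q^2} such that p_{α,β}(t) = t^{q+1} + α^q·t^q + α·t + (β + β^q) has q+1 distinct roots in F_{q^2}, the remainder of (αt+β)^a·t^b upon division by p_{α,β}(t) has degree at most q−1. -/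

import Mathlib

open Polynomial

open Finset

section DigitLemmas

lemma my_div_pred (X Y u : ℕ) (hX : 0 < X) (hY : 0 < Y) (h : u + 1 = X * Y) :
    u / X = Y - 1 := by
  have h1 : X * (Y - 1) + X = X * Y := by
    cases' Y with Z
    · omega
    · simp [Nat.mul_succ]
  have hu : u = X * (Y - 1) + (X - 1) := by omega
  rw [hu, Nat.mul_add_div hX, Nat.div_eq_of_lt (by omega)]
  omega

variable {p : ℕ}

lemma my_digit_eq (z s : ℕ) : z / p ^ s % p = z % p ^ (s+1) / p ^ s := by
  rw [pow_succ, Nat.mod_mul_right_div_self]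

lemma my_digit_add_le (hp : 2 ≤ p) {x y : ℕ} (s : ℕ) (hx : x / p^s % p = 0)
    (hy : y / p^s % p = 0) : (x+y) / p^s % p ≤ 1 := by
  have hP : 0 < p ^ s := pow_pos (by omega) s
  rw [my_digit_eq] at hx hy ⊢
  have hx' : x % p ^ (s+1) < p ^ s := (Nat.div_eq_zero_iff_lt hP).mp hx
  have hy' : y % p ^ (s+1) < p ^ s := (Nat.div_eq_zero_iff_lt hP).mp hy
  have hps : p ^ (s+1) = p ^ s * p := pow_succ p s
  have h2 : x % p ^ (s+1) + y % p ^ (s+1) < p ^ (s+1) := by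
    have : 2 * p ^ s ≤ p ^ s * p := by nlinarith
    omega
  have hsum : (x + y) % p ^ (s+1) = x % p ^ (s+1) + y % p ^ (s+1) := by
    rw [Nat.add_mod, Nat.mod_eq_of_lt h2]
  rw [hsum]
  have : (x % p ^ (s+1) + y % p ^ (s+1)) / p ^ s < 2 :=
    Nat.div_lt_of_lt_mul (by omega)
  omega

lemma my_digit_of_pow_dvd_succ (hp : 2 ≤ p) {u i : ℕ} (s : ℕ) (hs : s < i)
    (hdvd : p ^ i ∣ u + 1) : u / p ^ s % p = p - 1 := by
  obtain ⟨M, hM⟩ := hdvd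
  have hppos : 0 < p := by omega
  have hXpos : 0 < p ^ s := pow_pos hppos s
  have hMpos : 0 < M := by
    rcases Nat.eq_zero_or_pos M with h | h
    · simp [h] at hM
    · exact h
  obtain ⟨t, rfl⟩ : ∃ t, i = s + 1 + t := ⟨i - (s+1), by omega⟩
  have hBpos : 0 < p ^ t * M := Nat.mul_pos (pow_pos hppos t) hMpos
  have hM' : u + 1 = p ^ s * (p * (p ^ t * M)) := by rw [hM]; ring
  rw [my_div_pred (p ^ s) (p * (p ^ t * M)) u hXpos (Nat.mul_pos hppos hBpos) hM']
  have h2 : p * (p ^ t * M - 1) + (p - 1) = p * (p ^ t * M) - 1 := by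
    have : p * (p ^ t * M - 1) + p = p * (p ^ t * M) := by
      cases' hBE : (p ^ t * M) with C
      · omega
      · simp [Nat.mul_succ]
    omega
  rw [← h2, Nat.mul_add_mod, Nat.mod_eq_of_lt (by omega)]

variable [Fact p.Prime]

lemma my_lucas_dvd : ∀ (s n k : ℕ), n / p ^ s % p < k / p ^ s % p → p ∣ n.choose k := by
  intro s
  induction s with
  | zero =>
    intro n k h
    simp only [pow_zero, Nat.div_one] at h
    have hmod := Choose.choose_modEq_choose_mod_mul_choose_div_nat (p := p) (n := n) (k := k)
    have h0 : (n % p).choose (k % p) = 0 := Nat.choose_eq_zero_of_lt h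
    rw [h0, zero_mul] at hmod
    exact (Nat.modEq_zero_iff_dvd).mp hmod
  | succ s ih =>
    intro n k h
    have hrw : ∀ m : ℕ, m / p ^ (s+1) = (m / p) / p ^ s := by
      intro m
      rw [Nat.div_div_eq_div_mul, ← pow_succ']
    rw [hrw n, hrw k] at h
    obtain ⟨c, hc⟩ := ih _ _ h
    have hmod := Choose.choose_modEq_choose_mod_mul_choose_div_nat (p := p) (n := n) (k := k)
    rw [hc] at hmod
    have heq : (n % p).choose (k % p) * (p * c) = p * ((n % p).choose (k % p) * c) := by ring
    rw [heq] at hmod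
    exact (Nat.modEq_zero_iff_dvd).mp (hmod.trans (Nat.modEq_zero_iff_dvd.mpr ⟨_, rfl⟩))

lemma my_lucas_pow_dvd : ∀ (i w v : ℕ), p ^ i ∣ w → ¬ p ∣ w.choose v → p ^ i ∣ v := by
  intro i
  induction i with
  | zero => intro w v _ _; simp
  | succ i ih =>
    intro w v hw hnd
    have hp1 : 1 < p := (Fact.out : p.Prime).one_lt
    have hpw : p ∣ w := dvd_trans (dvd_pow_self p (Nat.succ_ne_zero i)) hw
    have hw0 : w % p = 0 := by
      obtain ⟨k, rfl⟩ := hpw; exact Nat.mul_mod_right p k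
    have hmod := Choose.choose_modEq_choose_mod_mul_choose_div_nat (p := p) (n := w) (k := v)
    have hv0 : v % p = 0 := by
      by_contra hv
      have h0 : (w % p).choose (v % p) = 0 := by
        rw [hw0]; exact Nat.choose_eq_zero_of_lt (by omega)
      rw [h0, zero_mul] at hmod
      exact hnd ((Nat.modEq_zero_iff_dvd).mp hmod)
    have hnd' : ¬ p ∣ (w / p).choose (v / p) := by
      intro ⟨c, hc⟩
      rw [hc] at hmod
      have heq : (w % p).choose (v % p) * (p * c) = p * ((w % p).choose (v % p) * c) := by ring
      rw [heq] at hmod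
      exact hnd ((Nat.modEq_zero_iff_dvd).mp (hmod.trans (Nat.modEq_zero_iff_dvd.mpr ⟨_, rfl⟩)))
    have hwp : p ^ i ∣ w / p := by
      obtain ⟨c, hc⟩ := hw
      refine ⟨c, ?_⟩
      rw [hc, pow_succ]
      have : p ^ i * p * c = p * (p ^ i * c) := by ring
      rw [this, Nat.mul_div_cancel_left _ (by omega : 0 < p)]
    have := ih _ _ hwp hnd'
    obtain ⟨c, hc⟩ := this
    have hvp : v = p * (v / p) := (Nat.mul_div_cancel' (Nat.dvd_of_mod_eq_zero hv0)).symm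
    exact ⟨c, by rw [hvp, hc, pow_succ]; ring⟩

end DigitLemmas

open Polynomial Finset

section PolyPart

variable {F : Type*} [Field F]

noncomputable def Pq (q : ℕ) (α T : F) : F[X] :=
  X ^ (q+1) + (C (α ^ q) * X ^ q + C α * X + C T)

noncomputable def eC (q : ℕ) (α T : F) (n : ℕ) : F :=
  ((X ^ n : F[X]) %ₘ Pq q α T).coeff q

variable {q : ℕ} {α T : F}

lemma Pq_rest_degree (hq0 : 0 < q) :
    degree (C (α ^ q) * X ^ q + C α * X + C T) < ((q+1 : ℕ) : WithBot ℕ) := by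
  have h1 : degree (C (α^q) * X^q) ≤ (q : ℕ) := degree_C_mul_X_pow_le _ _
  have h2 : degree (C α * X) ≤ (1 : ℕ) := by
    simpa using degree_C_mul_X_le α
  have h3 : degree (C T) ≤ (0 : ℕ) := by simpa using degree_C_le
  have hq1 : ((q : ℕ) : WithBot ℕ) < ((q+1 : ℕ) : WithBot ℕ) := by
    exact_mod_cast Nat.lt_succ_self q
  have hone : ((1 : ℕ) : WithBot ℕ) ≤ ((q : ℕ) : WithBot ℕ) := by
    exact_mod_cast hq0
  have hzero : ((0 : ℕ) : WithBot ℕ) ≤ ((q : ℕ) : WithBot ℕ) := by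
    exact_mod_cast Nat.zero_le q
  refine lt_of_le_of_lt (le_trans (degree_add_le _ _) ?_) hq1
  refine max_le (le_trans (degree_add_le _ _) ?_) (le_trans h3 hzero)
  exact max_le h1 (le_trans h2 hone)

lemma Pq_monic (hq0 : 0 < q) : (Pq q α T).Monic :=
  monic_X_pow_add (by exact_mod_cast Pq_rest_degree (α := α) (T := T) hq0)

lemma Pq_degree (hq0 : 0 < q) : (Pq q α T).degree = ((q+1 : ℕ) : WithBot ℕ) := by
  rw [Pq, degree_add_eq_left_of_degree_lt, degree_X_pow]
  rw [degree_X_pow]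
  exact Pq_rest_degree hq0

lemma eC_self (hq0 : 0 < q) {n : ℕ} (h : n < q + 1) :
    eC q α T n = if q = n then 1 else 0 := by
  rw [eC, (modByMonic_eq_self_iff (Pq_monic hq0)).mpr, coeff_X_pow]
  rw [Pq_degree hq0, degree_X_pow]
  exact_mod_cast h

lemma eC_low (hq0 : 0 < q) {n : ℕ} (h : n < q) : eC q α T n = 0 := by
  rw [eC_self hq0 (by omega), if_neg (by omega)]

lemma eC_q (hq0 : 0 < q) : eC q α T q = 1 := by
  rw [eC_self hq0 (by omega), if_pos rfl]

lemma eC_rec (hq0 : 0 < q) (n : ℕ) :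
    eC q α T (q+1+n) = -(α^q * eC q α T (q+n)) - α * eC q α T (n+1) - T * eC q α T n := by
  have hPm : (Pq q α T).Monic := Pq_monic hq0
  have key : (X : F[X])^(q+1+n) =
      X^n * Pq q α T - (C (α^q) * X^(q+n) + C α * X^(n+1) + C T * X^n) := by
    rw [Pq]; ring
  rw [eC, key, sub_modByMonic, mul_self_modByMonic hPm, zero_sub, coeff_neg,
    add_modByMonic, add_modByMonic]
  rw [← smul_eq_C_mul, ← smul_eq_C_mul, ← smul_eq_C_mul, smul_modByMonic, smul_modByMonic,
    smul_modByMonic]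
  simp only [coeff_add, coeff_smul, smul_eq_mul]
  rw [show (q+n) = q+n from rfl]
  unfold eC
  ring

end PolyPart

open Polynomial Finset

section SsumPart

variable {F : Type*} [Field F]

noncomputable def Ssum (q : ℕ) (γ : F) (W m : ℕ) : F :=
  ∑ u ∈ range q, γ ^ u * (m.choose u : F) * ((W+1).choose (u+1) : F)

variable {γ : F}

lemma Ssum_left_zero {q : ℕ} (hq0 : 0 < q) (m : ℕ) : Ssum q γ 0 m = 1 := by
  rw [Ssum, Finset.sum_eq_single 0]
  · simp
  · intro u _ hu
    obtain ⟨v, rfl⟩ : ∃ v, u = v + 1 := ⟨u - 1, by omega⟩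
    have : (1:ℕ).choose (v+1+1) = 0 := Nat.choose_eq_zero_of_lt (by omega)
    rw [this]; push_cast; ring
  · intro h; exact absurd (Finset.mem_range.mpr hq0) h

lemma Ssum_right_zero {q : ℕ} (hq0 : 0 < q) (W : ℕ) : Ssum q γ W 0 = ((W+1 : ℕ) : F) := by
  rw [Ssum, Finset.sum_eq_single 0]
  · simp
  · intro u _ hu
    obtain ⟨v, rfl⟩ : ∃ v, u = v + 1 := ⟨u - 1, by omega⟩
    have : (0:ℕ).choose (v+1) = 0 := Nat.choose_eq_zero_of_lt (by omega)
    rw [this]; push_cast; ring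
  · intro h; exact absurd (Finset.mem_range.mpr hq0) h

lemma Ssum_peel {Q : ℕ} (m W : ℕ) :
    Ssum (Q+1) γ W m
      = (∑ v ∈ range Q, γ^(v+1) * (m.choose (v+1) : F) * ((W+1).choose (v+2) : F))
        + ((W+1 : ℕ) : F) := by
  rw [Ssum, Finset.sum_range_succ']
  simp [Nat.choose_one_right]

lemma Ssum_shift {Q n V : ℕ} (hnQ : n < Q) :
    γ * Ssum (Q+1) γ V n
      = ∑ v ∈ range Q, γ^(v+1) * (n.choose v : F) * ((V+1).choose (v+1) : F) := by
  rw [Ssum, Finset.mul_sum]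
  have expand : ∀ u ∈ range (Q+1),
      γ * (γ ^ u * (n.choose u : F) * ((V+1).choose (u+1) : F))
        = γ ^ (u+1) * (n.choose u : F) * ((V+1).choose (u+1) : F) :=
    fun u _ => by ring
  rw [Finset.sum_congr rfl expand, Finset.sum_range_succ]
  rw [Nat.choose_eq_zero_of_lt hnQ]
  push_cast
  ring

lemma Ssum_pascal {q V n : ℕ} (hn : n + 1 < q) :
    Ssum q γ (V+1) (n+1) + Ssum q γ V n
      = Ssum q γ (V+1) n + Ssum q γ V (n+1) + γ * Ssum q γ V n := by
  obtain ⟨Q, rfl⟩ : ∃ Q, q = Q + 1 := ⟨q - 1, by omega⟩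
  have hnQ : n < Q := by omega
  rw [Ssum_shift hnQ, Ssum_peel (n+1) (V+1), Ssum_peel n V, Ssum_peel n (V+1),
    Ssum_peel (n+1) V]
  have hsum : (∑ v ∈ range Q, γ^(v+1) * ((n+1).choose (v+1) : F) * ((V+2).choose (v+2) : F))
      + (∑ v ∈ range Q, γ^(v+1) * (n.choose (v+1) : F) * ((V+1).choose (v+2) : F))
      = (∑ v ∈ range Q, γ^(v+1) * (n.choose (v+1) : F) * ((V+2).choose (v+2) : F))
        + ((∑ v ∈ range Q, γ^(v+1) * ((n+1).choose (v+1) : F) * ((V+1).choose (v+2) : F))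
          + (∑ v ∈ range Q, γ^(v+1) * (n.choose v : F) * ((V+1).choose (v+1) : F))) := by
    rw [← Finset.sum_add_distrib, ← Finset.sum_add_distrib, ← Finset.sum_add_distrib]
    refine Finset.sum_congr rfl fun v _ => ?_
    have e1 : (n+1).choose (v+1) = n.choose v + n.choose (v+1) := Nat.choose_succ_succ' n v
    have e2 : (V+2).choose (v+2) = (V+1).choose (v+1) + (V+1).choose (v+2) :=
      Nat.choose_succ_succ' (V+1) (v+1)
    rw [e1, e2]
    push_cast
    ring
  push_cast
  linear_combination hsum

lemma Ssum_wrap {Q : ℕ} (hchoose : ∀ u ≤ Q, ((Q.choose u : ℕ) : F) = (-1)^u)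
    {V : ℕ} (hV : V < Q) :
    Ssum (Q+1) γ (V+1) Q + γ * Ssum (Q+1) γ V Q = 1 + Ssum (Q+1) γ V Q := by
  set D := ∑ u ∈ range (Q+1), (-1 : F)^u * γ^u * ((V+1).choose u : F) with hD
  have h1 : Ssum (Q+1) γ (V+1) Q = D + Ssum (Q+1) γ V Q := by
    rw [Ssum, Ssum, hD, ← Finset.sum_add_distrib]
    refine Finset.sum_congr rfl fun u hu => ?_
    have huQ : u ≤ Q := by have := Finset.mem_range.mp hu; omega
    rw [hchoose u huQ]
    have e2 : (V+2).choose (u+1) = (V+1).choose u + (V+1).choose (u+1) :=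
      Nat.choose_succ_succ' (V+1) u
    rw [e2]
    push_cast
    ring
  have h2 : γ * Ssum (Q+1) γ V Q = 1 - D := by
    rw [Ssum, Finset.mul_sum]
    have expand : ∀ u ∈ range (Q+1),
        γ * (γ ^ u * (Q.choose u : F) * ((V+1).choose (u+1) : F))
          = -((-1 : F)^(u+1) * γ^(u+1) * ((V+1).choose (u+1) : F)) := by
      intro u hu
      have huQ : u ≤ Q := by have := Finset.mem_range.mp hu; omega
      rw [hchoose u huQ]
      ring
    rw [Finset.sum_congr rfl expand]
    have hre : ∑ u ∈ range (Q+1), (-1:F)^(u+1) * γ^(u+1) * (((V+1).choose (u+1) : ℕ) : F)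
        = D - 1 := by
      have hsucc' := Finset.sum_range_succ'
        (fun u => (-1:F)^u * γ^u * (((V+1).choose u : ℕ) : F)) (Q+1)
      have hsucc := Finset.sum_range_succ
        (fun u => (-1:F)^u * γ^u * (((V+1).choose u : ℕ) : F)) (Q+1)
      have hC0 : (((V+1).choose (Q+1) : ℕ) : F) = 0 := by
        rw [Nat.choose_eq_zero_of_lt (by omega)]; push_cast; ring
      simp only [hC0, mul_zero, add_zero, pow_zero, Nat.choose_zero_right, Nat.cast_one,
        mul_one, one_mul] at hsucc hsucc'
      rw [hD]
      linear_combination hsucc - hsucc'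
    rw [Finset.sum_neg_distrib, hre]
    ring
  linear_combination h1 + h2

end SsumPart

section ClosedForm

variable {F : Type*} [Field F]

lemma eC_alpha_zero {q : ℕ} {T : F} (hq0 : 0 < q) :
    ∀ W, W + 1 < q → ∀ m, m < q →
      eC q (0 : F) T (q + (W*q + m)) = if m = W then (-T)^W else 0 := by
  have hrec : ∀ n, eC q (0:F) T (q+1+n) = -T * eC q (0:F) T n := by
    intro n
    rw [eC_rec hq0 n, zero_pow (by omega : q ≠ 0)]
    ring
  intro W
  induction W using Nat.strong_induction_on with
  | _ W ihW =>
    intro hW m hm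
    obtain ⟨Q, rfl⟩ : ∃ Q, q = Q + 1 := ⟨q - 1, by omega⟩
    match m with
    | 0 =>
      match W with
      | 0 =>
        rw [show (Q+1) + (0*(Q+1) + 0) = Q+1 from by ring, eC_q hq0]
        simp
      | V+1 =>
        rw [show (Q+1) + ((V+1)*(Q+1) + 0) = (Q+1)+1 + (V*(Q+1) + Q) from by ring,
          hrec (V*(Q+1)+Q)]
        match V with
        | 0 =>
          rw [show 0*(Q+1)+Q = Q from by ring, eC_low hq0 (by omega)]
          simp
        | V'+1 =>
          rw [show (V'+1)*(Q+1)+Q = (Q+1) + (V'*(Q+1) + Q) from by ring,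
            ihW V' (by omega) (by omega) Q (by omega)]
          rw [if_neg (by omega), if_neg (by omega)]
          ring
    | n+1 =>
      rw [show (Q+1) + (W*(Q+1) + (n+1)) = (Q+1)+1 + (W*(Q+1) + n) from by ring,
        hrec (W*(Q+1)+n)]
      match W with
      | 0 =>
        rw [show 0*(Q+1)+n = n from by ring, eC_low hq0 (by omega)]
        rw [if_neg (by omega)]
        ring
      | V+1 =>
        rw [show (V+1)*(Q+1)+n = (Q+1) + (V*(Q+1) + n) from by ring,
          ihW V (by omega) (by omega) n (by omega)]
        by_cases hnV : n = V
        · rw [if_pos hnV, if_pos (by omega)]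
          ring
        · rw [if_neg hnV, if_neg (by omega)]
          ring

lemma eC_closed {Q : ℕ} {α T γ : F}
    (hsign : (-1 : F)^Q = 1)
    (hchoose : ∀ u ≤ Q, ((Q.choose u : ℕ) : F) = (-1)^u)
    (hαq : α^((Q+1)*(Q+1)) = α)
    (hγ : (1 - γ) * α^(Q+1+1) = T) :
    ∀ W, W < Q+1 → ∀ m, m < Q+1 →
      eC (Q+1) α T ((Q+1) + (W*(Q+1) + m))
        = (-1)^(W+m) * α^((Q+1)*m+W) * Ssum (Q+1) γ W m := by
  have hq0 : 0 < Q + 1 := Nat.succ_pos Q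
  have hAB : α^((Q+1)*Q) * α^(Q+1) = α := by
    rw [← pow_add, show (Q+1)*Q + (Q+1) = (Q+1)*(Q+1) from by ring]
    exact hαq
  intro W
  induction W using Nat.strong_induction_on with
  | _ W ihW =>
    intro hW m
    induction m with
    | zero =>
      intro _
      match W, hW with
      | 0, _ =>
        rw [show (Q+1) + (0*(Q+1) + 0) = Q+1 from by ring, eC_q hq0,
          Ssum_left_zero hq0]
        simp
      | V+1, hW =>
        rw [show (Q+1) + ((V+1)*(Q+1) + 0) = ((Q+1)+1) + (V*(Q+1) + Q) from by ring,
          eC_rec hq0 (V*(Q+1)+Q)]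
        have h1 : eC (Q+1) α T ((Q+1) + (V*(Q+1) + Q))
            = (-1)^(V+Q) * α^((Q+1)*Q+V) * Ssum (Q+1) γ V Q :=
          ihW V (by omega) (by omega) Q (by omega)
        have h2 : eC (Q+1) α T ((Q+1) + (V*(Q+1) + 0))
            = (-1)^(V+0) * α^((Q+1)*0+V) * Ssum (Q+1) γ V 0 :=
          ihW V (by omega) (by omega) 0 (by omega)
        rw [show (Q+1) + (V*(Q+1) + 0) = V*(Q+1) + Q + 1 from by ring] at h2
        rw [h1, h2]
        match V with
        | 0 =>
          rw [show 0*(Q+1)+Q = Q from by ring, eC_low hq0 (by omega)]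
          rw [Ssum_left_zero hq0, Ssum_left_zero hq0, Ssum_right_zero hq0]
          simp only [pow_add, pow_zero, pow_one, mul_zero, zero_add, hsign, mul_one, one_mul,
            Nat.mul_zero, Nat.zero_add, Nat.add_zero, mul_zero]
          push_cast
          linear_combination (-1 : F) * hAB
        | V'+1 =>
          rw [show (V'+1)*(Q+1)+Q = (Q+1) + (V'*(Q+1) + Q) from by ring,
            ihW V' (by omega) (by omega) Q (by omega)]
          rw [← hγ]
          have hwrap := Ssum_wrap (γ := γ) hchoose (V := V') (by omega)
          rw [Ssum_right_zero hq0, Ssum_right_zero hq0]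
          simp only [pow_add, pow_zero, pow_one, mul_zero, zero_add, hsign, mul_one, one_mul,
            Nat.mul_zero, Nat.zero_add, Nat.add_zero]
          push_cast
          linear_combination
            ((-1:F)^V' * α^V' * α) * hAB
            + ((-1:F)^V' * α^V' * α * α^((Q+1)*Q) * α^(Q+1)) * hwrap
    | succ n ihm =>
      intro hn
      rw [show (Q+1) + (W*(Q+1) + (n+1)) = ((Q+1)+1) + (W*(Q+1) + n) from by ring,
        eC_rec hq0 (W*(Q+1)+n)]
      have h1 : eC (Q+1) α T ((Q+1) + (W*(Q+1) + n))
          = (-1)^(W+n) * α^((Q+1)*n+W) * Ssum (Q+1) γ W n := ihm (by omega)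
      rw [h1]
      match W, hW with
      | 0, _ =>
        rw [show 0*(Q+1)+n+1 = n+1 from by ring, eC_low hq0 (by omega),
          show 0*(Q+1)+n = n from by ring, eC_low hq0 (by omega)]
        rw [Ssum_left_zero hq0, Ssum_left_zero hq0]
        simp only [pow_add, mul_one, mul_zero]
        ring
      | V+1, hW =>
        have h2 : eC (Q+1) α T ((Q+1) + (V*(Q+1) + (n+1)))
            = (-1)^(V+(n+1)) * α^((Q+1)*(n+1)+V) * Ssum (Q+1) γ V (n+1) :=
          ihW V (by omega) (by omega) (n+1) (by omega)
        have h3 : eC (Q+1) α T ((Q+1) + (V*(Q+1) + n))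
            = (-1)^(V+n) * α^((Q+1)*n+V) * Ssum (Q+1) γ V n :=
          ihW V (by omega) (by omega) n (by omega)
        rw [show (Q+1) + (V*(Q+1) + (n+1)) = (V+1)*(Q+1) + n + 1 from by ring] at h2
        rw [show (Q+1) + (V*(Q+1) + n) = (V+1)*(Q+1) + n from by ring] at h3
        rw [h2, h3, ← hγ]
        have hpas := Ssum_pascal (γ := γ) (q := Q+1) (V := V) (n := n) (by omega)
        simp only [pow_add, pow_zero, pow_one, mul_one, one_mul]
        linear_combination
          (-((-1:F)^V * (-1:F)^n * α^((Q+1)*n) * α^V * α^(Q+1) * α)) * hpas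

end ClosedForm

section Final

variable {F : Type*} [Field F]

lemma coeff_mod_expand {q : ℕ} (α β T : F) (a b : ℕ) :
    (((C α * X + C β)^a * X^b : F[X]) %ₘ Pq q α T).coeff q
      = ∑ j ∈ Finset.range (a+1),
          (a.choose j : F) * α^j * β^(a-j) * eC q α T (b+j) := by
  rw [add_pow, Finset.sum_mul]
  have hterm : ∀ j ∈ Finset.range (a+1),
      (C α * X)^j * (C β)^(a-j) * ((a.choose j : ℕ) : F[X]) * X^b
        = (α^j * β^(a-j) * ((a.choose j : ℕ) : F)) • (X : F[X])^(b+j) := by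
    intro j _
    rw [mul_pow, ← C_pow, ← C_pow, ← C_eq_natCast, smul_eq_C_mul, C_mul, C_mul, pow_add]
    ring
  rw [Finset.sum_congr rfl hterm]
  have hmod := map_sum (Polynomial.modByMonicHom (Pq q α T))
    (fun j => (α^j * β^(a-j) * ((a.choose j : ℕ) : F)) • (X : F[X])^(b+j))
    (Finset.range (a+1))
  simp only [Polynomial.modByMonicHom, LinearMap.coe_mk, AddHom.coe_mk] at hmod
  rw [hmod, finset_sum_coeff]
  refine Finset.sum_congr rfl fun j _ => ?_
  rw [smul_modByMonic, coeff_smul, smul_eq_mul, eC]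
  ring

lemma choose_Q_cast {p : ℕ} (hp : p.Prime) [CharP F p] {l Q : ℕ} (hQ : Q + 1 = p^l) :
    ∀ u ≤ Q, ((Q.choose u : ℕ) : F) = (-1 : F)^u := by
  intro u
  induction u with
  | zero => intro _; simp
  | succ v ihv =>
    intro hv
    have hvQ : v ≤ Q := by omega
    have hP : (((Q+1).choose (v+1) : ℕ) : F) = 0 := by
      rw [(CharP.cast_eq_zero_iff F p _)]
      rw [hQ]
      exact Nat.Prime.dvd_choose_pow hp (by omega) (by omega)
    rw [Nat.choose_succ_succ' Q v] at hP
    push_cast at hP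
    rw [ihv hvQ] at hP
    have : ((Q.choose (v+1) : ℕ) : F) = -(-1:F)^v := by linear_combination hP
    rw [this]
    ring

end Final

/-- Lemma 9 (sufficient conditions for good monomials): if `a ≤ q-1`, `b ≤ q^2-1`,
`b = wq + b'` with `w < q`, `b' < p^(l-1)`, `p^i ∣ w` for some `1 ≤ i ≤ l`,
`a < p^(l-1)`, and for some `0 ≤ s ≤ i-1` the `s`-th base-`p` digits of both `a` and `b'`
vanish, then `M_{a,b} = x^a y^b` is good: for every secant line `L_{α,β}`, the remainder of
`(αt+β)^a t^b` modulo `p_{α,β}(t)` has degree at most `q-1`. -/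
theorem good_monomial_conditions (p l q : ℕ) (hp : p.Prime) (hodd : Odd p) (hl : 2 ≤ l)
    (hq : q = p ^ l) (F : Type*) [Field F] [Fintype F] (hF : Fintype.card F = q ^ 2)
    (a b : ℕ) (ha : a ≤ q - 1) (hb : b ≤ q ^ 2 - 1) (ha' : a < p ^ (l - 1))
    (hcond : ∃ w b' i, b = w * q + b' ∧ w < q ∧ b' < p ^ (l - 1) ∧
      1 ≤ i ∧ i ≤ l ∧ p ^ i ∣ w ∧
      ∃ s, s ≤ i - 1 ∧ a / p ^ s % p = 0 ∧ b' / p ^ s % p = 0) :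
    ∀ α β : F, ∀ σ : Fin (q + 1) → F, Function.Injective σ →
      (∀ i, (σ i) ^ (q + 1) + α ^ q * (σ i) ^ q + α * (σ i) + (β + β ^ q) = 0) →
      (((C α * X + C β) ^ a * X ^ b : F[X]) %ₘ
        (X ^ (q + 1) + C (α ^ q) * X ^ q + C α * X + C (β + β ^ q))).degree
          ≤ ((q - 1 : ℕ) : WithBot ℕ) := by
  intro α β σ _ _
  haveI : Fact p.Prime := ⟨hp⟩
  have hp2 : 2 ≤ p := hp.two_le
  have hp3 : 3 ≤ p := by
    have hpne : p ≠ 2 := by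
      rintro rfl
      rw [Nat.odd_iff] at hodd
      omega
    omega
  obtain ⟨l2, rfl⟩ : ∃ l2, l = l2 + 2 := ⟨l - 2, by omega⟩
  have hl1 : (l2 + 2) - 1 = l2 + 1 := by omega
  rw [hl1] at ha'
  obtain ⟨w, b', i, hb_eq, hw_lt, hb'_lt, hi1, hil, hpiw, s, hs_le, ha_dig, hb_dig⟩ := hcond
  rw [hl1] at hb'_lt
  have hs_lt : s < i := by omega
  -- characteristic
  haveI hcharR : CharP F (ringChar F) := ringChar.charP F
  obtain ⟨n, hrprime, hcard⟩ := FiniteField.card F (ringChar F)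
  have hpr : p = ringChar F := by
    have hd : p ∣ ringChar F ^ (n : ℕ) := by
      rw [← hcard, hF, hq]
      exact dvd_trans (dvd_pow_self p (by omega)) (dvd_pow_self _ (by omega))
    exact (Nat.prime_dvd_prime_iff_eq hp hrprime).mp (hp.dvd_of_dvd_pow hd)
  haveI hcharP : CharP F p := by rw [hpr]; exact hcharR
  have hq0 : 0 < q := by rw [hq]; positivity
  have hq2 : 2 * p ^ (l2+1) ≤ q := by
    rw [hq, show p^(l2+2) = p^(l2+1)*p from pow_succ p (l2+1), mul_comm]
    exact Nat.mul_le_mul_left _ (by omega)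
  have hPq : (X ^ (q + 1) + C (α ^ q) * X ^ q + C α * X + C (β + β ^ q) : F[X])
      = Pq q α (β + β ^ q) := by rw [Pq]; ring
  rw [hPq]
  rcases Nat.eq_zero_or_pos w with rfl | hwpos
  · -- w = 0 : low degree case
    have hbb' : b = b' := by simpa using hb_eq
    have hab : a + b < q := by omega
    have hdeg : degree ((C α * X + C β)^a * X^b : F[X]) ≤ ((a+b : ℕ) : WithBot ℕ) := by
      refine le_trans (degree_mul_le _ _) ?_
      have h1 : degree ((C α * X + C β)^a : F[X]) ≤ ((a : ℕ) : WithBot ℕ) := by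
        have := degree_pow_le_of_le (p := (C α * X + C β : F[X])) a degree_linear_le
        simpa using this
      have h2 : degree ((X : F[X])^b) ≤ ((b : ℕ) : WithBot ℕ) := by
        rw [degree_X_pow]
      refine le_trans (add_le_add h1 h2) ?_
      rw [← Nat.cast_add]
    rw [(modByMonic_eq_self_iff (Pq_monic hq0)).mpr
      (lt_of_le_of_lt hdeg (by rw [Pq_degree hq0]; exact_mod_cast (by omega : a + b < q + 1)))]
    exact le_trans hdeg (by exact_mod_cast (by omega : a + b ≤ q - 1))
  · -- w ≥ 1
    obtain ⟨W, rfl⟩ : ∃ W, w = W + 1 := ⟨w - 1, by omega⟩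
    apply (degree_le_iff_coeff_zero _ _).mpr
    intro m hm
    have hm' : q - 1 < m := by exact_mod_cast hm
    by_cases hmq : m = q
    · rw [hmq, coeff_mod_expand]
      apply Finset.sum_eq_zero
      intro j hj
      have hj' : j ≤ a := by have := Finset.mem_range.mp hj; omega
      by_cases hCa : ((a.choose j : ℕ) : F) = 0
      · rw [hCa]; ring
      · have hpnd : ¬ p ∣ a.choose j := fun hdvd => hCa ((CharP.cast_eq_zero_iff F p _).mpr hdvd)
        have hjdig : j / p^s % p = 0 := by
          by_contra hcon
          exact hpnd (my_lucas_dvd s a j (by omega))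
        have hmdig : (b'+j) / p^s % p ≤ 1 := my_digit_add_le hp2 s hb_dig hjdig
        have hbj_lt : b' + j < q := by omega
        have hidx : b + j = q + (W*q + (b'+j)) := by rw [hb_eq]; ring
        suffices hsuf : eC q α (β + β^q) (b+j) = 0 by rw [hsuf]; ring
        rcases eq_or_ne α 0 with hα0 | hα0
        · rw [hα0, hidx, eC_alpha_zero hq0 W hw_lt (b'+j) hbj_lt, if_neg ?hne]
          case hne =>
            intro heq
            have hdig : (b'+j) / p^s % p = p - 1 :=
              my_digit_of_pow_dvd_succ hp2 s hs_lt (by rw [heq]; exact hpiw)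
            omega
        · obtain ⟨Q, hQ⟩ : ∃ Q, q = Q+1 := ⟨q-1, by omega⟩
          subst hQ
          have hqodd : Odd (Q+1) := hq ▸ hodd.pow
          have hQeven : Even Q := by
            rw [Nat.even_iff]; rw [Nat.odd_iff] at hqodd; omega
          have hsign : (-1 : F)^Q = 1 := Even.neg_one_pow hQeven
          have hchoose := choose_Q_cast (F := F) hp (l := l2+2) (Q := Q) hq
          have hαq : α^((Q+1)*(Q+1)) = α := by
            have hpc := FiniteField.pow_card α
            rw [hF] at hpc
            rw [← hpc]
            congr 1
            ring
          have hα2 : α^(Q+1+1) ≠ 0 := pow_ne_zero _ hα0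
          set γ : F := 1 - (β + β^(Q+1)) * (α^(Q+1+1))⁻¹ with hγdef
          have hγ : (1 - γ) * α^(Q+1+1) = β + β^(Q+1) := by
            rw [hγdef]
            field_simp
            ring
          rw [hidx, eC_closed hsign hchoose hαq hγ W (by omega) (b'+j) (by omega)]
          have hS : Ssum (Q+1) γ W (b'+j) = 0 := by
            apply Finset.sum_eq_zero
            intro u hu
            by_cases hpW : p ∣ (W+1).choose (u+1)
            · rw [(CharP.cast_eq_zero_iff F p _).mpr hpW]; ring
            · have hdvd : p^i ∣ u+1 := my_lucas_pow_dvd i (W+1) (u+1) hpiw hpW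
              have hudig : u / p^s % p = p - 1 := my_digit_of_pow_dvd_succ hp2 s hs_lt hdvd
              have hbju : p ∣ (b'+j).choose u := my_lucas_dvd s (b'+j) u (by omega)
              rw [(CharP.cast_eq_zero_iff F p _).mpr hbju]; ring
          rw [hS]
          ring
    · have hlt := degree_modByMonic_lt ((C α * X + C β)^a * X^b : F[X])
        (Pq_monic (α := α) (T := β + β^q) hq0)
      rw [Pq_degree (α := α) (T := β + β^q) hq0] at hlt
      refine coeff_eq_zero_of_degree_lt (lt_of_lt_of_le hlt ?_)
      exact_mod_cast (by omega : q + 1 ≤ m)
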